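/- In the Meyerson monoid M_{4,6}, if n ∈ M_{4,6} is divisible by 4 and there exist two distinct primes p, p' ≡ 5 (mod 6) with p·p' ∣ n, then n is reducible in M_{4,6}. -/

import Mathlib

/-- Membership in the Meyerson monoid `M_{4,6}`. -/
def memM46 (n : ℕ) : Prop := (1 ≤ n ∧ n ≡ 4 [MOD 6]) ∨ n = 1

theorem meyerson_reducible (n : ℕ) (hn : memM46 n) (h4 : 4 ∣ n)
    (p p' : ℕ) (hp : p.Prime) (hp' : p'.Prime) (hne : p ≠ p')
    (hpc : p ≡ 5 [MOD 6]) (hp'c : p' ≡ 5 [MOD 6]) (hdvd : p * p' ∣ n) :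
    ∃ m m' : ℕ, memM46 m ∧ memM46 m' ∧ 1 < m ∧ 1 < m' ∧ n = m * m' := by
  have hp6 : p % 6 = 5 := hpc
  have hn6 : n % 6 = 4 := by
    rcases hn with ⟨_, h⟩ | h
    · exact h
    · obtain ⟨k, hk⟩ := h4; omega
  have hpn : p ∣ n := dvd_trans (dvd_mul_right p p') hdvd
  have hpnot2 : ¬ (2 ∣ p) := by intro h; obtain ⟨t, ht⟩ := h; omega
  have hcop : Nat.Coprime 2 p := (Nat.Prime.coprime_iff_not_dvd Nat.prime_two).mpr hpnot2
  have h2n : 2 ∣ n := dvd_trans (by norm_num) h4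
  have h2pn : 2 * p ∣ n := Nat.Coprime.mul_dvd_of_dvd_of_dvd hcop h2n hpn
  obtain ⟨k, hk⟩ := h2pn
  -- k is even
  have h2pk : 2 ∣ p * k := by
    obtain ⟨t, ht⟩ := h4
    have : 2 * (p * k) = 4 * t := by rw [← mul_assoc, ← hk, ht]
    omega
  have h2k : 2 ∣ k := (Nat.Coprime.dvd_of_dvd_mul_left hcop) h2pk
  -- k ≡ 1 mod 3
  have hmod3 : 2 * p ≡ 1 [MOD 3] := by unfold Nat.ModEq; omega
  have hnk3 : 2 * p * k ≡ 1 * k [MOD 3] := Nat.ModEq.mul_right k hmod3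
  have hk3 : k % 3 = 1 := by
    have h1 : (2 * p * k) % 3 = k % 3 := by have h0 := hnk3; rw [one_mul] at h0; exact h0
    have h2 : n % 3 = 1 := by omega
    rw [← hk] at h1; omega
  have hk6 : k % 6 = 4 := by obtain ⟨t, ht⟩ := h2k; omega
  refine ⟨2 * p, k, Or.inl ⟨by omega, ?_⟩, Or.inl ⟨by omega, ?_⟩, by omega, by omega, hk⟩
  · show (2 * p) % 6 = 4 % 6; omega
  · show k % 6 = 4 % 6; omega
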